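/- Fix γ > 1. Let U = (ρ, m₁, m₂, E) be a 2D Euler state in the admissible set G, and let α be a real number with α ≥ |v₁| + a, where v₁ = m₁/ρ and a = √(γp(U)/ρ). Then both vectors U + F₁(U)/α and U − F₁(U)/α belong to G, i.e. each has positive density and positive pressure. -/

import Mathlib

/-- Pressure of a 2D Euler state `U = (ρ, m₁, m₂, E)` with adiabatic index `γ`. -/
noncomputable def eulerPressure2D (γ : ℝ) (U : Fin 4 → ℝ) : ℝ :=
  (γ - 1) * (U 3 - (U 1 ^ 2 + U 2 ^ 2) / (2 * U 0))

/-- Sound speed of a 2D Euler state. -/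
noncomputable def eulerSound2D (γ : ℝ) (U : Fin 4 → ℝ) : ℝ :=
  Real.sqrt (γ * eulerPressure2D γ U / U 0)

/-- x-directional flux of the 2D Euler equations. -/
noncomputable def eulerFlux2D (γ : ℝ) (U : Fin 4 → ℝ) : Fin 4 → ℝ :=
  ![U 1, U 1 ^ 2 / U 0 + eulerPressure2D γ U, U 1 * U 2 / U 0,
    (U 3 + eulerPressure2D γ U) * U 1 / U 0]

/-- Admissible state set of the 2D Euler equations. -/
def eulerAdm2D (γ : ℝ) : Set (Fin 4 → ℝ) :=
  {U | 0 < U 0 ∧ 0 < eulerPressure2D γ U}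

lemma euler_core (γ ρ v w p β c : ℝ) (hγ : 1 < γ) (hρ : 0 < ρ) (hβ : 0 < β)
    (hc : c ≠ 0) (hp0 : 0 < p) (hpc : γ * p * c ^ 2 ≤ ρ * β ^ 2) :
    0 < (γ - 1) * (((p / (γ - 1) + ρ * (v ^ 2 + w ^ 2) / 2) * β + p * v * c) -
      ((ρ * v * β + p * c) ^ 2 + (ρ * w * β) ^ 2) / (2 * (ρ * β))) := by
  have hγ' : γ - 1 ≠ 0 := by linarith
  have key : (γ - 1) * (((p / (γ - 1) + ρ * (v ^ 2 + w ^ 2) / 2) * β + p * v * c) -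
      ((ρ * v * β + p * c) ^ 2 + (ρ * w * β) ^ 2) / (2 * (ρ * β)))
      = β * p - (γ - 1) * p ^ 2 * c ^ 2 / (2 * (ρ * β)) := by
    field_simp
    try ring
  rw [key, sub_pos, div_lt_iff₀ (by positivity)]
  have hc2 : 0 < c ^ 2 := by positivity
  nlinarith [mul_pos (pow_pos hp0 2) hc2, mul_le_mul_of_nonneg_left hpc hp0.le]

lemma euler_aux (γ : ℝ) (hγ : 1 < γ) (U : Fin 4 → ℝ) (hρ : 0 < U 0)
    (hp : 0 < eulerPressure2D γ U) (c : ℝ) (hc : c ≠ 0)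
    (hβ : 0 < 1 + c * (U 1 / U 0))
    (hpc : γ * eulerPressure2D γ U * c ^ 2 ≤ U 0 * (1 + c * (U 1 / U 0)) ^ 2) :
    U + c • eulerFlux2D γ U ∈ eulerAdm2D γ := by
  have hρ' : (U 0) ≠ 0 := ne_of_gt hρ
  have hγ' : γ - 1 ≠ 0 := by linarith
  set p := eulerPressure2D γ U with hpdef
  set V := U + c • eulerFlux2D γ U with hV
  have e0 : V 0 = U 0 * (1 + c * (U 1 / U 0)) := by
    simp only [hV, Pi.add_apply, Pi.smul_apply, smul_eq_mul, eulerFlux2D,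
      Matrix.cons_val_zero]
    field_simp
    try ring
  have e1 : V 1 = U 0 * (U 1 / U 0) * (1 + c * (U 1 / U 0)) + p * c := by
    simp only [hV, Pi.add_apply, Pi.smul_apply, smul_eq_mul, eulerFlux2D,
      Matrix.cons_val_one, Matrix.head_cons, ← hpdef, Matrix.cons_val_zero]
    field_simp
    try ring
  have e2 : V 2 = U 0 * (U 2 / U 0) * (1 + c * (U 1 / U 0)) := by
    simp only [hV, Pi.add_apply, Pi.smul_apply, smul_eq_mul, eulerFlux2D, Matrix.cons_val]
    norm_num [Matrix.cons_val_succ, Matrix.cons_val]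
    field_simp
    try ring
  have e3 : V 3 = (p / (γ - 1) + U 0 * ((U 1 / U 0) ^ 2 + (U 2 / U 0) ^ 2) / 2) *
      (1 + c * (U 1 / U 0)) + p * (U 1 / U 0) * c := by
    simp only [hV, Pi.add_apply, Pi.smul_apply, smul_eq_mul, eulerFlux2D, Matrix.cons_val]
    norm_num [Matrix.cons_val_succ, ← hpdef, Matrix.cons_val]
    rw [hpdef, eulerPressure2D]
    field_simp
    try ring
  constructor
  · rw [e0]; positivity
  · show 0 < eulerPressure2D γ V
    rw [eulerPressure2D, e0, e1, e2, e3]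
    exact euler_core γ (U 0) (U 1 / U 0) (U 2 / U 0) p (1 + c * (U 1 / U 0)) c
      hγ hρ hβ hc hp hpc

lemma euler_sign (γ : ℝ) (hγ : 1 < γ) (U : Fin 4 → ℝ) (hρ : 0 < U 0)
    (hp : 0 < eulerPressure2D γ U) (α c : ℝ)
    (hα : |U 1 / U 0| + eulerSound2D γ U ≤ α) (hcabs : |c| = α⁻¹) :
    c ≠ 0 ∧ 0 < 1 + c * (U 1 / U 0) ∧
      γ * eulerPressure2D γ U * c ^ 2 ≤ U 0 * (1 + c * (U 1 / U 0)) ^ 2 := by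
  set p := eulerPressure2D γ U with hpdef
  set a := eulerSound2D γ U with hadef
  set v := U 1 / U 0 with hvdef
  have hγ0 : (0:ℝ) < γ := by linarith
  have ha : 0 < a := by
    rw [hadef, eulerSound2D]
    exact Real.sqrt_pos.mpr (by positivity)
  have ha2 : a ^ 2 = γ * p / U 0 := by
    rw [hadef, eulerSound2D, ← hpdef, Real.sq_sqrt (by positivity)]
  have hα0 : 0 < α := lt_of_lt_of_le (add_pos_of_nonneg_of_pos (abs_nonneg _) ha) hα
  have hiα : 0 < α⁻¹ := inv_pos.mpr hα0
  have hc0 : c ≠ 0 := abs_pos.mp (hcabs ▸ hiα)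
  have hcv : -(|v| * α⁻¹) ≤ c * v := by
    have h1 := neg_abs_le (c * v)
    have h2 : |c * v| = |v| * α⁻¹ := by rw [abs_mul, hcabs]; ring
    linarith [h2 ▸ h1]
  have hone : (|v| + a) * α⁻¹ ≤ 1 := by
    rw [← mul_inv_cancel₀ (ne_of_gt hα0)]
    exact mul_le_mul_of_nonneg_right hα hiα.le
  have hβa : a * α⁻¹ ≤ 1 + c * v := by nlinarith
  have hβ : 0 < 1 + c * v := lt_of_lt_of_le (mul_pos ha hiα) hβa
  refine ⟨hc0, hβ, ?_⟩
  have hUa : U 0 * a ^ 2 = γ * p := by rw [ha2]; field_simp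
  have hc2 : c ^ 2 = α⁻¹ ^ 2 := by rw [← sq_abs, hcabs]
  have h1 : (a * α⁻¹) ^ 2 ≤ (1 + c * v) ^ 2 :=
    pow_le_pow_left₀ (by positivity) hβa 2
  calc γ * p * c ^ 2 = (U 0 * a ^ 2) * α⁻¹ ^ 2 := by rw [hUa, hc2]
    _ = U 0 * (a * α⁻¹) ^ 2 := by ring
    _ ≤ U 0 * (1 + c * v) ^ 2 := mul_le_mul_of_nonneg_left h1 hρ.le

theorem euler2D_shifted_states_admissible
    (γ : ℝ) (hγ : 1 < γ) (U : Fin 4 → ℝ) (hU : U ∈ eulerAdm2D γ) (α : ℝ)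
    (hα : |U 1 / U 0| + eulerSound2D γ U ≤ α) :
    U + α⁻¹ • eulerFlux2D γ U ∈ eulerAdm2D γ ∧
    U - α⁻¹ • eulerFlux2D γ U ∈ eulerAdm2D γ := by
  obtain ⟨hρ, hp⟩ := hU
  have hα0 : 0 < α := by
    have ha : 0 < eulerSound2D γ U := by
      rw [eulerSound2D]
      exact Real.sqrt_pos.mpr (by positivity)
    exact lt_of_lt_of_le (add_pos_of_nonneg_of_pos (abs_nonneg _) ha) hα
  constructor
  · obtain ⟨h1, h2, h3⟩ := euler_sign γ hγ U hρ hp α α⁻¹ hα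
      (abs_of_pos (inv_pos.mpr hα0))
    exact euler_aux γ hγ U hρ hp α⁻¹ h1 h2 h3
  · obtain ⟨h1, h2, h3⟩ := euler_sign γ hγ U hρ hp α (-α⁻¹) hα
      (by rw [abs_neg]; exact abs_of_pos (inv_pos.mpr hα0))
    have heq : U - α⁻¹ • eulerFlux2D γ U = U + (-α⁻¹) • eulerFlux2D γ U := by
      rw [neg_smul, sub_eq_add_neg]
    rw [heq]
    exact euler_aux γ hγ U hρ hp (-α⁻¹) h1 h2 h3
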